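/- Let G be a graph on n vertices with m edges, and let t be a number such that nt is an integer with nt ≤ 2m. Then min over threshold assignments τ with average exactly t of dyn_τ(G) equals n − max{|V(H)| : H an induced subgraph of G with |E(H)| ≤ 2m − nt}. -/

import Mathlib

open Finset

variable {V : Type*}

noncomputable section

/-- The set of edges of `G` covered by the vertex set `S` (i.e. incident with some vertex of `S`). -/
def coveredEdges (G : SimpleGraph V) [Fintype V] [DecidableEq V] [DecidableRel G.Adj]
    (S : Finset V) : Finset (Sym2 V) :=
  G.edgeFinset.filter (fun e => ∃ v ∈ S, v ∈ e)

/-- `τ` is a valid threshold assignment: `0 ≤ τ v ≤ deg v`. -/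
def validThresholds (G : SimpleGraph V) [Fintype V] [DecidableRel G.Adj] (τ : V → ℕ) : Prop :=
  ∀ v, τ v ≤ G.degree v

/-- `M` is a `τ`-static monopoly: every vertex outside `M` has at least `τ v` neighbors in `M`. -/
def isMonopoly (G : SimpleGraph V) [Fintype V] [DecidableEq V] [DecidableRel G.Adj]
    (τ : V → ℕ) (M : Finset V) : Prop :=
  ∀ v ∉ M, τ v ≤ (G.neighborFinset v ∩ M).card

/-- One activation step: add all vertices with at least `τ v` neighbors among active vertices. -/
def dynStep (G : SimpleGraph V) [Fintype V] [DecidableEq V] [DecidableRel G.Adj]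
    (τ : V → ℕ) (A : Finset V) : Finset V :=
  A ∪ Finset.univ.filter (fun v => τ v ≤ (G.neighborFinset v ∩ A).card)

/-- `D` is a `τ`-dynamic monopoly: iterating activation from `D` reaches all vertices. -/
def isDynMonopoly (G : SimpleGraph V) [Fintype V] [DecidableEq V] [DecidableRel G.Adj]
    (τ : V → ℕ) (D : Finset V) : Prop :=
  ∃ k, (dynStep G τ)^[k] D = Finset.univ

/-- `Pbeta G s`: minimum size of a vertex set covering at least `s` edges of `G`. -/
def Pbeta (G : SimpleGraph V) [Fintype V] [DecidableEq V] [DecidableRel G.Adj] (s : ℕ) : ℕ :=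
  sInf {c | ∃ S : Finset V, S.card = c ∧ s ≤ (coveredEdges G S).card}

/-- `Smon G t`: minimum size of a `τ`-static monopoly over all valid `τ` with average at least `t`. -/
def Smon (G : SimpleGraph V) [Fintype V] [DecidableEq V] [DecidableRel G.Adj] (t : ℝ) : ℕ :=
  sInf {c | ∃ (τ : V → ℕ) (M : Finset V), validThresholds G τ ∧
    (Fintype.card V : ℝ) * t ≤ ∑ v, (τ v : ℝ) ∧ isMonopoly G τ M ∧ M.card = c}

/-- `Sdyn G t`: minimum size of a `τ`-dynamic monopoly over all valid `τ` with average at least `t`. -/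
def Sdyn (G : SimpleGraph V) [Fintype V] [DecidableEq V] [DecidableRel G.Adj] (t : ℝ) : ℕ :=
  sInf {c | ∃ (τ : V → ℕ) (D : Finset V), validThresholds G τ ∧
    (Fintype.card V : ℝ) * t ≤ ∑ v, (τ v : ℝ) ∧ isDynMonopoly G τ D ∧ D.card = c}

section AuxLemmas

variable (G : SimpleGraph V) [Fintype V] [DecidableEq V] [DecidableRel G.Adj]

private lemma nbr_inter_card_eq_sum (v : V) (A : Finset V) (p : V → Prop) [DecidablePred p] :
    (G.neighborFinset v ∩ A.filter p).card
      = ∑ w ∈ A, if G.Adj v w ∧ p w then 1 else 0 := by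
  rw [← Finset.card_filter]
  congr 1
  ext w
  simp only [Finset.mem_inter, SimpleGraph.mem_neighborFinset, Finset.mem_filter]
  tauto

private lemma sum_count_swap (A : Finset V) (p : V → V → Prop) [DecidableRel p] :
    ∑ v ∈ A, (G.neighborFinset v ∩ A.filter (fun w => p v w)).card
      = ∑ v ∈ A, (G.neighborFinset v ∩ A.filter (fun w => p w v)).card := by
  simp_rw [nbr_inter_card_eq_sum]
  rw [Finset.sum_comm]
  exact Finset.sum_congr rfl fun v _ => Finset.sum_congr rfl fun w _ =>
    if_congr (and_congr_left' (G.adj_comm w v)) rfl rfl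

private def indG (A : Finset V) : SimpleGraph V where
  Adj u w := G.Adj u w ∧ u ∈ A ∧ w ∈ A
  symm := ⟨fun u w ⟨h, ha, hb⟩ => ⟨h.symm, hb, ha⟩⟩
  loopless := ⟨fun u h => G.loopless.irrefl u h.1⟩

private instance indG_dec (A : Finset V) : DecidableRel (indG G A).Adj :=
  fun u w => inferInstanceAs (Decidable (G.Adj u w ∧ u ∈ A ∧ w ∈ A))

private lemma indG_edgeFinset (A : Finset V) :
    (indG G A).edgeFinset = G.edgeFinset.filter (fun e => ∀ v ∈ e, v ∈ A) := by
  ext e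
  induction e using Sym2.ind with
  | _ u w =>
    simp only [SimpleGraph.mem_edgeFinset, Finset.mem_filter, SimpleGraph.mem_edgeSet]
    simp only [SimpleGraph.mem_edgeFinset, Finset.mem_filter, SimpleGraph.mem_edgeSet, indG,
      Sym2.mem_iff]
    constructor
    · rintro ⟨h, ha, hb⟩
      refine ⟨h, fun x hx => ?_⟩
      rcases hx with rfl | rfl <;> assumption
    · rintro ⟨h, hA⟩
      exact ⟨h, hA u (Or.inl rfl), hA w (Or.inr rfl)⟩

private lemma handshake (A : Finset V) :
    ∑ v ∈ A, (G.neighborFinset v ∩ A).card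
      = 2 * (G.edgeFinset.filter (fun e => ∀ v ∈ e, v ∈ A)).card := by
  have h := SimpleGraph.sum_degrees_eq_twice_card_edges (indG G A)
  rw [indG_edgeFinset] at h
  calc ∑ v ∈ A, (G.neighborFinset v ∩ A).card
      = ∑ v ∈ A, (indG G A).degree v := by
        refine Finset.sum_congr rfl fun v hv => ?_
        rw [SimpleGraph.degree]
        congr 1
        ext w
        simp only [Finset.mem_inter, SimpleGraph.mem_neighborFinset]
        simp only [Finset.mem_inter, SimpleGraph.mem_neighborFinset, indG]
        tauto
    _ = ∑ v, (indG G A).degree v := by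
        refine Finset.sum_subset (Finset.subset_univ A) fun v _ hv => ?_
        rw [SimpleGraph.degree, Finset.card_eq_zero]
        ext w
        simp only [SimpleGraph.mem_neighborFinset, Finset.notMem_empty, iff_false]
        simp only [SimpleGraph.mem_neighborFinset, Finset.notMem_empty, iff_false, indG]
        tauto
    _ = 2 * (G.edgeFinset.filter (fun e => ∀ v ∈ e, v ∈ A)).card := h

private lemma nbr_split (v : V) (S : Finset V) (p : V → Prop) [DecidablePred p] :
    (G.neighborFinset v ∩ S.filter p).card
      + (G.neighborFinset v ∩ S.filter (fun w => ¬ p w)).card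
      = (G.neighborFinset v ∩ S).card := by
  have h1 : G.neighborFinset v ∩ S.filter p = (G.neighborFinset v ∩ S).filter p := by
    ext w; simp only [Finset.mem_inter, Finset.mem_filter]; tauto
  have h2 : G.neighborFinset v ∩ S.filter (fun w => ¬ p w)
      = (G.neighborFinset v ∩ S).filter (fun w => ¬ p w) := by
    ext w; simp only [Finset.mem_inter, Finset.mem_filter]; tauto
  rw [h1, h2]
  exact Finset.card_filter_add_card_filter_not p

private lemma key_ineq (A : Finset V) (t : V → ℕ) (τ : V → ℕ)
    (hvalid : validThresholds G τ)
    (hτ : ∀ v ∈ A, τ v ≤ (G.neighborFinset v ∩ univ.filter (fun w => t w < t v)).card) :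
    (∑ v, τ v) + (G.edgeFinset.filter (fun e => ∀ v ∈ e, v ∈ A)).card
      ≤ 2 * G.edgeFinset.card := by
  -- e(A) ≤ ∑_{v ∈ A} #(nbr w with ¬ t w < t v)
  have hEA : 2 * (G.edgeFinset.filter (fun e => ∀ v ∈ e, v ∈ A)).card
      ≤ 2 * ∑ v ∈ A, (G.neighborFinset v ∩ A.filter (fun w => ¬ t w < t v)).card := by
    rw [← handshake]
    calc ∑ v ∈ A, (G.neighborFinset v ∩ A).card
        = ∑ v ∈ A, ((G.neighborFinset v ∩ A.filter (fun w => t w < t v)).card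
            + (G.neighborFinset v ∩ A.filter (fun w => ¬ t w < t v)).card) :=
          Finset.sum_congr rfl fun v _ => (nbr_split G v A (fun w => t w < t v)).symm
      _ = ∑ v ∈ A, (G.neighborFinset v ∩ A.filter (fun w => t w < t v)).card
            + ∑ v ∈ A, (G.neighborFinset v ∩ A.filter (fun w => ¬ t w < t v)).card :=
          Finset.sum_add_distrib
      _ ≤ 2 * ∑ v ∈ A, (G.neighborFinset v ∩ A.filter (fun w => ¬ t w < t v)).card := by
          rw [two_mul]
          refine Nat.add_le_add_right ?_ _
          rw [show (∑ v ∈ A, (G.neighborFinset v ∩ A.filter (fun w => t w < t v)).card)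
              = ∑ v ∈ A, (G.neighborFinset v ∩ A.filter (fun w => t v < t w)).card from
            sum_count_swap G A (fun v w => t w < t v)]
          refine Finset.sum_le_sum fun v _ => Finset.card_le_card
            (Finset.inter_subset_inter (Finset.Subset.refl _) ?_)
          intro w hw
          simp only [Finset.mem_filter] at hw ⊢
          exact ⟨hw.1, by omega⟩
  have hsumA : ∑ v ∈ A, τ v + (G.edgeFinset.filter (fun e => ∀ v ∈ e, v ∈ A)).card
      ≤ ∑ v ∈ A, G.degree v := by
    have h1 : ∑ v ∈ A, τ v
        ≤ ∑ v ∈ A, (G.neighborFinset v ∩ univ.filter (fun w => t w < t v)).card :=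
      Finset.sum_le_sum hτ
    have h2 : ∑ v ∈ A, (G.neighborFinset v ∩ A.filter (fun w => ¬ t w < t v)).card
        ≤ ∑ v ∈ A, (G.neighborFinset v ∩ univ.filter (fun w => ¬ t w < t v)).card := by
      refine Finset.sum_le_sum fun v _ => Finset.card_le_card
        (Finset.inter_subset_inter (Finset.Subset.refl _)
          (Finset.filter_subset_filter _ (Finset.subset_univ A)))
    have h3 : ∀ v ∈ A, (G.neighborFinset v ∩ univ.filter (fun w => t w < t v)).card
        + (G.neighborFinset v ∩ univ.filter (fun w => ¬ t w < t v)).card = G.degree v := by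
      intro v _
      rw [nbr_split, Finset.inter_univ, SimpleGraph.degree]
    have h4 : ∑ v ∈ A, (G.neighborFinset v ∩ univ.filter (fun w => t w < t v)).card
        + ∑ v ∈ A, (G.neighborFinset v ∩ univ.filter (fun w => ¬ t w < t v)).card
        = ∑ v ∈ A, G.degree v := by
      rw [← Finset.sum_add_distrib]
      exact Finset.sum_congr rfl h3
    omega
  have hsplit : ∑ v ∈ A, τ v + ∑ v ∈ Aᶜ, τ v = ∑ v, τ v := Finset.sum_add_sum_compl A τ
  have hdsplit : ∑ v ∈ A, G.degree v + ∑ v ∈ Aᶜ, G.degree v = ∑ v, G.degree v :=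
    Finset.sum_add_sum_compl A _
  have hAc : ∑ v ∈ Aᶜ, τ v ≤ ∑ v ∈ Aᶜ, G.degree v :=
    Finset.sum_le_sum fun v _ => hvalid v
  have htot : ∑ v, G.degree v = 2 * G.edgeFinset.card :=
    SimpleGraph.sum_degrees_eq_twice_card_edges G
  omega

end AuxLemmas

section AuxLemmas2

variable (G : SimpleGraph V) [Fintype V] [DecidableEq V] [DecidableRel G.Adj]

private lemma dyn_times (τ : V → ℕ) (D : Finset V) (h : isDynMonopoly G τ D) :
    ∃ t : V → ℕ, ∀ v ∉ D, τ v ≤ (G.neighborFinset v ∩ univ.filter (fun w => t w < t v)).card := by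
  obtain ⟨k, hk⟩ := h
  set t : V → ℕ := fun v => sInf {i | v ∈ (dynStep G τ)^[i] D} with ht
  have hne : ∀ v, v ∈ (dynStep G τ)^[k] D := by rw [hk]; exact fun v => Finset.mem_univ v
  have hmem : ∀ v, v ∈ (dynStep G τ)^[t v] D := fun v =>
    Nat.sInf_mem (s := {i | v ∈ (dynStep G τ)^[i] D}) ⟨k, hne v⟩
  refine ⟨t, fun v hv => ?_⟩
  have ht0 : t v ≠ 0 := by
    intro h0
    have := hmem v
    rw [h0, Function.iterate_zero_apply] at this
    exact hv this
  obtain ⟨j, hj⟩ := Nat.exists_eq_succ_of_ne_zero ht0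
  have hvj : v ∉ (dynStep G τ)^[j] D := fun hmem' => by
    have : t v ≤ j := Nat.sInf_le hmem'
    omega
  have hstep : v ∈ dynStep G τ ((dynStep G τ)^[j] D) := by
    have := hmem v
    rw [hj, Function.iterate_succ_apply'] at this
    exact this
  rcases Finset.mem_union.mp hstep with h1 | h1
  · exact absurd h1 hvj
  · simp only [Finset.mem_filter, Finset.mem_univ, true_and] at h1
    refine le_trans h1 (Finset.card_le_card
      (Finset.inter_subset_inter (Finset.Subset.refl _) ?_))
    intro w hw
    simp only [Finset.mem_filter, Finset.mem_univ, true_and]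
    have : t w ≤ j := Nat.sInf_le hw
    omega

private lemma iter_mono {τ τ' : V → ℕ} (h : ∀ v, τ' v ≤ τ v) (D : Finset V) :
    ∀ k, (dynStep G τ)^[k] D ⊆ (dynStep G τ')^[k] D := by
  intro k
  induction k with
  | zero => exact Finset.Subset.refl D
  | succ k ih =>
    rw [Function.iterate_succ_apply', Function.iterate_succ_apply']
    intro v hv
    rcases Finset.mem_union.mp hv with h1 | h1
    · exact Finset.mem_union_left _ (ih h1)
    · simp only [Finset.mem_filter, Finset.mem_univ, true_and] at h1
      refine Finset.mem_union_right _ ?_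
      simp only [Finset.mem_filter, Finset.mem_univ, true_and]
      exact le_trans (h v) (le_trans h1 (Finset.card_le_card
        (Finset.inter_subset_inter (Finset.Subset.refl _) ih)))

private lemma dyn_mono {τ τ' : V → ℕ} (h : ∀ v, τ' v ≤ τ v) (D : Finset V)
    (hd : isDynMonopoly G τ D) : isDynMonopoly G τ' D := by
  obtain ⟨k, hk⟩ := hd
  exact ⟨k, Finset.univ_subset_iff.mp (hk ▸ iter_mono G h D k)⟩

private lemma exists_le_sum [Fintype V] (s : ℕ) (f : V → ℕ) (hf : s ≤ ∑ v, f v) :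
    ∃ g : V → ℕ, (∀ v, g v ≤ f v) ∧ ∑ v, g v = s := by
  classical
  suffices H : ∀ d (f : V → ℕ), ∑ v, f v = s + d →
      ∃ g : V → ℕ, (∀ v, g v ≤ f v) ∧ ∑ v, g v = s by
    exact H (∑ v, f v - s) f (by omega)
  intro d
  induction d with
  | zero => exact fun f hf => ⟨f, fun v => le_rfl, by omega⟩
  | succ d ih =>
    intro f hf
    have hpos : ∃ v, 0 < f v := by
      by_contra hcon
      push_neg at hcon
      have : ∑ v, f v = 0 := Finset.sum_eq_zero fun v _ => Nat.le_zero.mp (hcon v)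
      omega
    obtain ⟨v, hv⟩ := hpos
    obtain ⟨g, hg1, hg2⟩ := ih (Function.update f v (f v - 1)) (by
      rw [Finset.sum_update_of_mem (Finset.mem_univ v)]
      have := Finset.sum_eq_sum_sdiff_singleton_add (Finset.mem_univ v) f
      omega)
    refine ⟨g, fun w => le_trans (hg1 w) ?_, hg2⟩
    by_cases hw : w = v
    · subst hw
      rw [Function.update_self]
      omega
    · rw [Function.update_of_ne hw]

private lemma construct (A : Finset V) :
    ∃ τ : V → ℕ, validThresholds G τ ∧
      (∑ v, τ v) + (G.edgeFinset.filter (fun e => ∀ v ∈ e, v ∈ A)).card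
        = 2 * G.edgeFinset.card ∧
      isDynMonopoly G τ Aᶜ := by
  classical
  set r : V → ℕ := fun v => ((Fintype.equivFin V) v : ℕ) with hr
  have hrinj : Function.Injective r := fun a b hab =>
    (Fintype.equivFin V).injective (Fin.val_injective hab)
  set τ : V → ℕ := fun v => if v ∈ A then
      (G.neighborFinset v ∩ univ.filter (fun w => w ∉ A ∨ r w < r v)).card
    else G.degree v with hτ
  have hvalid : validThresholds G τ := by
    intro v
    rw [hτ]
    dsimp only
    split
    · exact Finset.card_le_card Finset.inter_subset_left
    · exact le_rfl
  -- set identity for the complement count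
  have hset : ∀ v, G.neighborFinset v ∩ univ.filter (fun w => ¬ (w ∉ A ∨ r w < r v))
      = G.neighborFinset v ∩ A.filter (fun w => r v < r w) := by
    intro v
    ext w
    simp only [Finset.mem_inter, SimpleGraph.mem_neighborFinset, Finset.mem_filter,
      Finset.mem_univ, true_and, not_or, not_not]
    constructor
    · rintro ⟨hadj, hwA, hlt⟩
      have hne : r w ≠ r v := fun hrw => (G.ne_of_adj hadj).symm (hrinj hrw)
      exact ⟨hadj, hwA, by omega⟩
    · rintro ⟨hadj, hwA, hlt⟩
      exact ⟨hadj, hwA, by omega⟩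
  have hset2 : ∀ v, G.neighborFinset v ∩ A.filter (fun w => ¬ r v < r w)
      = G.neighborFinset v ∩ A.filter (fun w => r w < r v) := by
    intro v
    ext w
    simp only [Finset.mem_inter, SimpleGraph.mem_neighborFinset, Finset.mem_filter]
    constructor
    · rintro ⟨hadj, hwA, hlt⟩
      have hne : r w ≠ r v := fun hrw => (G.ne_of_adj hadj).symm (hrinj hrw)
      exact ⟨hadj, hwA, by omega⟩
    · rintro ⟨hadj, hwA, hlt⟩
      exact ⟨hadj, hwA, by omega⟩
  -- ∑_{v∈A} #(nbr ∩ A, r v < r w) = e(A)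
  have hEA : 2 * ∑ v ∈ A, (G.neighborFinset v ∩ A.filter (fun w => r v < r w)).card
      = 2 * (G.edgeFinset.filter (fun e => ∀ v ∈ e, v ∈ A)).card := by
    rw [← handshake]
    have h1 : ∀ v ∈ A, (G.neighborFinset v ∩ A.filter (fun w => r v < r w)).card
        + (G.neighborFinset v ∩ A.filter (fun w => ¬ r v < r w)).card
        = (G.neighborFinset v ∩ A).card := fun v _ => nbr_split G v A _
    have h2 : ∑ v ∈ A, (G.neighborFinset v ∩ A.filter (fun w => r w < r v)).card
        = ∑ v ∈ A, (G.neighborFinset v ∩ A.filter (fun w => r v < r w)).card :=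
      sum_count_swap G A (fun v w => r w < r v)
    calc 2 * ∑ v ∈ A, (G.neighborFinset v ∩ A.filter (fun w => r v < r w)).card
        = ∑ v ∈ A, (G.neighborFinset v ∩ A.filter (fun w => r v < r w)).card
          + ∑ v ∈ A, (G.neighborFinset v ∩ A.filter (fun w => r w < r v)).card := by
          rw [h2]; ring
      _ = ∑ v ∈ A, (G.neighborFinset v ∩ A.filter (fun w => r v < r w)).card
          + ∑ v ∈ A, (G.neighborFinset v ∩ A.filter (fun w => ¬ r v < r w)).card := by
          rw [show (∑ v ∈ A, (G.neighborFinset v ∩ A.filter (fun w => r w < r v)).card)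
              = ∑ v ∈ A, (G.neighborFinset v ∩ A.filter (fun w => ¬ r v < r w)).card from
            Finset.sum_congr rfl fun v _ => by rw [hset2 v]]
      _ = ∑ v ∈ A, (G.neighborFinset v ∩ A).card := by
          rw [← Finset.sum_add_distrib]
          exact Finset.sum_congr rfl h1
  -- sum identity
  have hτA : ∀ v ∈ A, τ v + (G.neighborFinset v ∩ A.filter (fun w => r v < r w)).card
      = G.degree v := by
    intro v hvA
    have := nbr_split G v univ (fun w => w ∉ A ∨ r w < r v)
    rw [hset v, Finset.inter_univ] at this
    rw [hτ]
    dsimp only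
    rw [if_pos hvA]
    exact this
  have hsum : (∑ v, τ v) + (G.edgeFinset.filter (fun e => ∀ v ∈ e, v ∈ A)).card
      = 2 * G.edgeFinset.card := by
    have hs1 : ∑ v ∈ A, τ v + ∑ v ∈ Aᶜ, τ v = ∑ v, τ v := Finset.sum_add_sum_compl A τ
    have hs2 : ∑ v ∈ A, G.degree v + ∑ v ∈ Aᶜ, G.degree v = ∑ v, G.degree v :=
      Finset.sum_add_sum_compl A _
    have hs3 : ∑ v ∈ Aᶜ, τ v = ∑ v ∈ Aᶜ, G.degree v := by
      refine Finset.sum_congr rfl fun v hv => ?_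
      rw [hτ]
      dsimp only
      rw [if_neg (Finset.mem_compl.mp hv)]
    have hs4 : ∑ v ∈ A, τ v + ∑ v ∈ A, (G.neighborFinset v ∩ A.filter (fun w => r v < r w)).card
        = ∑ v ∈ A, G.degree v := by
      rw [← Finset.sum_add_distrib]
      exact Finset.sum_congr rfl hτA
    have htot : ∑ v, G.degree v = 2 * G.edgeFinset.card :=
      SimpleGraph.sum_degrees_eq_twice_card_edges G
    omega
  -- dynamic monopoly
  have key : ∀ k, ∀ v, (v ∉ A ∨ r v < k) → v ∈ (dynStep G τ)^[k] Aᶜ := by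
    intro k
    induction k with
    | zero =>
      rintro v (hv | hv)
      · exact Finset.mem_compl.mpr hv
      · omega
    | succ k ih =>
      intro v hv
      rw [Function.iterate_succ_apply']
      by_cases hcase : v ∉ A ∨ r v < k
      · exact Finset.mem_union_left _ (ih v hcase)
      · push_neg at hcase
        obtain ⟨hvA, hk⟩ := hcase
        have hrv : r v = k := by
          rcases hv with h | h
          · exact absurd hvA h
          · omega
        refine Finset.mem_union_right _ ?_
        simp only [Finset.mem_filter, Finset.mem_univ, true_and]
        have hτv : τ v = (G.neighborFinset v ∩ univ.filter (fun w => w ∉ A ∨ r w < r v)).card := by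
          rw [hτ]; dsimp only; rw [if_pos hvA]
        rw [hτv]
        refine Finset.card_le_card (Finset.inter_subset_inter (Finset.Subset.refl _) ?_)
        intro w hw
        simp only [Finset.mem_filter, Finset.mem_univ, true_and] at hw
        refine ih w ?_
        rcases hw with h | h
        · exact Or.inl h
        · exact Or.inr (by omega)
  refine ⟨τ, hvalid, hsum, ⟨Fintype.card V, ?_⟩⟩
  refine Finset.eq_univ_of_forall fun v => key _ v (Or.inr ?_)
  exact ((Fintype.equivFin V) v).isLt

end AuxLemmas2

theorem stmt7 (G : SimpleGraph V) [Fintype V] [DecidableEq V] [DecidableRel G.Adj]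
    (s : ℕ) (hs : s ≤ 2 * G.edgeFinset.card) :
    sInf {c | ∃ (τ : V → ℕ) (D : Finset V), validThresholds G τ ∧
        (∑ v, τ v) = s ∧ isDynMonopoly G τ D ∧ D.card = c}
      = Fintype.card V - sSup {c | ∃ A : Finset V, A.card = c ∧
          (G.edgeFinset.filter (fun e => ∀ v ∈ e, v ∈ A)).card
            ≤ 2 * G.edgeFinset.card - s} := by
  classical
  set T : Set ℕ := {c | ∃ A : Finset V, A.card = c ∧
      (G.edgeFinset.filter (fun e => ∀ v ∈ e, v ∈ A)).card
        ≤ 2 * G.edgeFinset.card - s} with hT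
  set S : Set ℕ := {c | ∃ (τ : V → ℕ) (D : Finset V), validThresholds G τ ∧
      (∑ v, τ v) = s ∧ isDynMonopoly G τ D ∧ D.card = c} with hS
  -- T is nonempty (contains 0) and bounded
  have hT0 : (0 : ℕ) ∈ T := by
    refine ⟨∅, Finset.card_empty, ?_⟩
    have : G.edgeFinset.filter (fun e => ∀ v ∈ e, v ∈ (∅ : Finset V)) = ∅ := by
      refine Finset.filter_eq_empty_iff.mpr fun e _ => ?_
      intro h
      exact absurd (h _ (Sym2.out_fst_mem e)) (Finset.notMem_empty _)
    rw [this]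
    exact Nat.zero_le _
  have hTbdd : BddAbove T := by
    refine ⟨Fintype.card V, fun c hc => ?_⟩
    obtain ⟨A, hA, _⟩ := hc
    exact hA ▸ Finset.card_le_univ A
  obtain ⟨A, hAcard, hAe⟩ := Nat.sSup_mem ⟨0, hT0⟩ hTbdd
  -- construct an element of S of size n - sSup T
  obtain ⟨τ₀, hτ₀v, hτ₀sum, hτ₀dyn⟩ := construct G A
  have hs' : s ≤ ∑ v, τ₀ v := by omega
  obtain ⟨τ, hτle, hτsum⟩ := exists_le_sum s τ₀ hs'
  have hmemS : (Fintype.card V - sSup T) ∈ S := by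
    refine ⟨τ, Aᶜ, fun v => le_trans (hτle v) (hτ₀v v), hτsum,
      dyn_mono G hτle Aᶜ hτ₀dyn, ?_⟩
    rw [Finset.card_compl, hAcard]
  -- every element of S is at least n - sSup T
  have hlow : ∀ c ∈ S, Fintype.card V - sSup T ≤ c := by
    rintro c ⟨τ', D, hvalid, hsum, hdyn, hcard⟩
    obtain ⟨t, ht⟩ := dyn_times G τ' D hdyn
    have hki := key_ineq G Dᶜ t τ' hvalid (fun v hv => ht v (Finset.mem_compl.mp hv))
    rw [hsum] at hki
    have hmemT : (Fintype.card V - c) ∈ T := by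
      refine ⟨Dᶜ, ?_, by omega⟩
      rw [Finset.card_compl, hcard]
    have h1 : Fintype.card V - c ≤ sSup T := le_csSup hTbdd hmemT
    have h2 : c ≤ Fintype.card V := hcard ▸ Finset.card_le_univ D
    omega
  exact le_antisymm (Nat.sInf_le hmemS) (le_csInf ⟨_, hmemS⟩ hlow)
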